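/- Let (m_k)_{k≥0} be a real sequence with m_0 = 1, let (a_k) and (W_n) be as in the context, and set b_n = Σ_{k=0}^n (n choose k)·k·m_k·a_{n−k}. Then for every n ≥ 0 the Wick polynomial W_n satisfies the differential equation n·W_n(x) − (x − m_1)·W_n′(x) + Σ_{k=2}^n (b_k/k!)·W_n^{(k)}(x) = 0, as an identity in ℝ[x], where W_n^{(k)} denotes the k-th formal derivative. -/

import Mathlib

open Finset

private lemma tri_swap (N : ℕ) (F : ℕ → ℕ → ℝ) :
    ∑ k ∈ range (N+1), ∑ i ∈ range (k+1), F i k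
      = ∑ i ∈ range (N+1), ∑ l ∈ range (N+1-i), F i (i+l) := by
  have h := Finset.sum_Ico_Ico_comm 0 (N+1) F
  simp only [← Finset.range_eq_Ico] at h
  rw [← h]
  apply Finset.sum_congr
  · rw [Finset.range_eq_Ico]
  · intro i hi
    rw [Finset.sum_Ico_eq_sum_range]

private lemma tri_swap2 (M : ℕ) (F : ℕ → ℕ → ℝ) :
    ∑ i ∈ range (M+1), ∑ l ∈ range (M+1-i), F i l
      = ∑ l ∈ range (M+1), ∑ i ∈ range (M+1-l), F i l := by
  have h1 := tri_swap M (fun i k => F i (k - i))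
  have h2 := tri_swap M (fun l k => F (k - l) l)
  simp only [Nat.add_sub_cancel_left] at h1 h2
  rw [← h1, ← h2]
  apply Finset.sum_congr rfl
  intro k hk
  rw [← Finset.sum_range_reflect]
  apply Finset.sum_congr rfl
  intro i hi
  simp only [Finset.mem_range] at hi ⊢
  have h3 : k + 1 - 1 - i = k - i := by omega
  rw [h3]
  congr 1
  omega

private lemma trinom {M i l : ℕ} (h : i + l ≤ M) :
    M.choose i * (M-i).choose l = M.choose l * (M-l).choose i := by
  have e1 := Nat.choose_mul (n := M) (k := i+l) (s := i) (Nat.le_add_right i l)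
  have e2 := Nat.choose_mul (n := M) (k := i+l) (s := l) (Nat.le_add_left l i)
  rw [Nat.add_sub_cancel_left] at e1
  rw [Nat.add_sub_cancel] at e2
  have e3 : (i+l).choose i = (i+l).choose l := by
    rw [← Nat.choose_symm (Nat.le_add_left l i), Nat.add_sub_cancel]
  rw [← e1, ← e2, e3]

/-- coefficients of A(t)² as EGF -/
private def csq (a : ℕ → ℝ) (M : ℕ) : ℝ :=
  ∑ l ∈ Finset.range (M+1), (M.choose l : ℝ) * a l * a (M-l)

private lemma MA2 (m a : ℕ → ℝ)
    (hδ : ∀ M : ℕ, ∑ i ∈ Finset.range (M+1), (M.choose i : ℝ) * m i * a (M-i)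
      = if M = 0 then 1 else 0) (M : ℕ) :
    ∑ i ∈ Finset.range (M+1), (M.choose i : ℝ) * m i * csq a (M-i) = a M := by
  have step1 : ∑ i ∈ Finset.range (M+1), (M.choose i : ℝ) * m i * csq a (M-i)
      = ∑ i ∈ range (M+1), ∑ l ∈ range (M+1-i),
          (M.choose i : ℝ) * m i * ((M-i).choose l : ℝ) * a l * a (M-i-l) := by
    apply Finset.sum_congr rfl
    intro i hi
    rw [Finset.mem_range] at hi
    rw [csq, show M+1-i = (M-i)+1 by omega, Finset.mul_sum]
    apply Finset.sum_congr rfl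
    intro l hl
    ring
  rw [step1, tri_swap2 M (fun i l => (M.choose i : ℝ) * m i * ((M-i).choose l : ℝ) * a l * a (M-i-l))]
  have step2 : ∀ l ∈ range (M+1),
      ∑ i ∈ range (M+1-l), (M.choose i : ℝ) * m i * ((M-i).choose l : ℝ) * a l * a (M-i-l)
      = (M.choose l : ℝ) * a l * (if M - l = 0 then 1 else 0) := by
    intro l hl
    rw [Finset.mem_range] at hl
    have : ∑ i ∈ range (M+1-l), (M.choose i : ℝ) * m i * ((M-i).choose l : ℝ) * a l * a (M-i-l)
        = (M.choose l : ℝ) * a l * ∑ i ∈ range ((M-l)+1), ((M-l).choose i : ℝ) * m i * a (M-l-i) := by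
      rw [Finset.mul_sum, show (M-l)+1 = M+1-l by omega]
      apply Finset.sum_congr rfl
      intro i hi
      rw [Finset.mem_range] at hi
      have ht : M.choose i * (M-i).choose l = M.choose l * (M-l).choose i := trinom (by omega)
      have ht' : (M.choose i : ℝ) * ((M-i).choose l : ℝ) = (M.choose l : ℝ) * ((M-l).choose i : ℝ) := by
        exact_mod_cast congrArg (Nat.cast : ℕ → ℝ) ht
      have hsub : M - i - l = M - l - i := by omega
      rw [hsub]
      linear_combination (m i * a l * a (M-l-i)) * ht'
    rw [this, hδ (M-l)]
  rw [Finset.sum_congr rfl step2]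
  rw [Finset.sum_eq_single_of_mem M (Finset.self_mem_range_succ M)]
  · simp
  · intro l hl hne
    rw [Finset.mem_range] at hl
    rw [if_neg (by omega), mul_zero]

private lemma csq_deriv (a : ℕ → ℝ) (M : ℕ) :
    (M:ℝ) * csq a M = 2 * ∑ l ∈ Finset.range (M+1), (M.choose l : ℝ) * l * a l * a (M-l) := by
  have hrefl : ∑ l ∈ range (M+1), (M.choose l : ℝ) * ((M-l : ℕ) : ℝ) * a l * a (M-l)
      = ∑ l ∈ range (M+1), (M.choose l : ℝ) * l * a l * a (M-l) := by
    rw [← Finset.sum_range_reflect]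
    apply Finset.sum_congr rfl
    intro l hl
    rw [Finset.mem_range] at hl
    have h1 : M + 1 - 1 - l = M - l := by omega
    have h2 : M - (M - l) = l := by omega
    rw [h1, h2, Nat.choose_symm (by omega : l ≤ M)]
    ring
  calc (M:ℝ) * csq a M
      = ∑ l ∈ range (M+1), ((M.choose l : ℝ) * l * a l * a (M-l)
          + (M.choose l : ℝ) * ((M-l : ℕ) : ℝ) * a l * a (M-l)) := by
        rw [csq, Finset.mul_sum]
        apply Finset.sum_congr rfl
        intro l hl
        rw [Finset.mem_range] at hl
        rw [Nat.cast_sub (by omega : l ≤ M)]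
        ring
    _ = _ := by rw [Finset.sum_add_distrib, hrefl]; ring

private lemma tMp (m a : ℕ → ℝ)
    (hδ : ∀ M : ℕ, ∑ i ∈ Finset.range (M+1), (M.choose i : ℝ) * m i * a (M-i)
      = if M = 0 then 1 else 0) (M : ℕ) :
    ∑ i ∈ Finset.range (M+1), (M.choose i : ℝ) * m i * ((M-i : ℕ) : ℝ) * csq a (M-i)
      = 2 * M * a M := by
  have step1 : ∑ i ∈ Finset.range (M+1), (M.choose i : ℝ) * m i * ((M-i : ℕ) : ℝ) * csq a (M-i)
      = ∑ i ∈ range (M+1), ∑ l ∈ range (M+1-i),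
          2 * ((M.choose i : ℝ) * m i * (((M-i).choose l : ℝ) * l * a l * a (M-i-l))) := by
    apply Finset.sum_congr rfl
    intro i hi
    rw [Finset.mem_range] at hi
    have h := csq_deriv a (M-i)
    calc (M.choose i : ℝ) * m i * ((M-i : ℕ) : ℝ) * csq a (M-i)
        = (M.choose i : ℝ) * m i * (((M-i : ℕ) : ℝ) * csq a (M-i)) := by ring
      _ = (M.choose i : ℝ) * m i *
            (2 * ∑ l ∈ range ((M-i)+1), ((M-i).choose l : ℝ) * l * a l * a (M-i-l)) := by rw [h]
      _ = _ := by
          rw [show (M-i)+1 = M+1-i by omega, Finset.mul_sum, Finset.mul_sum]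
          apply Finset.sum_congr rfl
          intro l hl
          ring
  rw [step1, tri_swap2 M (fun i l =>
    2 * ((M.choose i : ℝ) * m i * (((M-i).choose l : ℝ) * l * a l * a (M-i-l))))]
  have step2 : ∀ l ∈ range (M+1),
      ∑ i ∈ range (M+1-l), 2 * ((M.choose i : ℝ) * m i * (((M-i).choose l : ℝ) * l * a l * a (M-i-l)))
      = 2 * (M.choose l : ℝ) * l * a l * (if M - l = 0 then 1 else 0) := by
    intro l hl
    rw [Finset.mem_range] at hl
    have : ∑ i ∈ range (M+1-l), 2 * ((M.choose i : ℝ) * m i * (((M-i).choose l : ℝ) * l * a l * a (M-i-l)))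
        = 2 * (M.choose l : ℝ) * l * a l *
            ∑ i ∈ range ((M-l)+1), ((M-l).choose i : ℝ) * m i * a (M-l-i) := by
      rw [Finset.mul_sum, show (M-l)+1 = M+1-l by omega]
      apply Finset.sum_congr rfl
      intro i hi
      rw [Finset.mem_range] at hi
      have ht : M.choose i * (M-i).choose l = M.choose l * (M-l).choose i := trinom (by omega)
      have ht' : (M.choose i : ℝ) * ((M-i).choose l : ℝ) = (M.choose l : ℝ) * ((M-l).choose i : ℝ) := by
        exact_mod_cast congrArg (Nat.cast : ℕ → ℝ) ht
      have hsub : M - i - l = M - l - i := by omega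
      rw [hsub]
      linear_combination (2 * m i * (l:ℝ) * a l * a (M-l-i)) * ht'
    rw [this, hδ (M-l)]
  rw [Finset.sum_congr rfl step2]
  rw [Finset.sum_eq_single_of_mem M (Finset.self_mem_range_succ M)]
  · rw [if_pos (by omega), Nat.choose_self]
    push_cast
    ring
  · intro l hl hne
    rw [Finset.mem_range] at hl
    rw [if_neg (by omega), mul_zero]

/-- With `(a k)` defined from `(m k)` by `a 0 = 1` and
`∑_{k≤n} (n choose k) m k a (n-k) = 0` for `n ≥ 1`, the Wick polynomials
`W n = ∑_{k≤n} (n choose k) a k x^(n-k)` satisfy the differential equation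
`n·W n - (x - m 1)·W n' + ∑_{k=2}^n (b k / k!)·W n^(k) = 0`, where
`b n = ∑_{k≤n} (n choose k) k m k a (n-k)` and `W n^(k)` is the `k`-th formal
derivative. -/
theorem stmt_9 (m : ℕ → ℝ) (hm0 : m 0 = 1)
    (a : ℕ → ℝ) (ha0 : a 0 = 1)
    (ha : ∀ n : ℕ, 1 ≤ n →
      ∑ k ∈ Finset.range (n + 1), (n.choose k : ℝ) * m k * a (n - k) = 0)
    (W : ℕ → Polynomial ℝ)
    (hW : ∀ n, W n =
      ∑ k ∈ Finset.range (n + 1),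
        Polynomial.C ((n.choose k : ℝ) * a k) * Polynomial.X ^ (n - k))
    (b : ℕ → ℝ)
    (hb : ∀ n, b n =
      ∑ k ∈ Finset.range (n + 1), (n.choose k : ℝ) * k * m k * a (n - k)) :
    ∀ n : ℕ,
      Polynomial.C (n : ℝ) * W n -
        (Polynomial.X - Polynomial.C (m 1)) * Polynomial.derivative (W n) +
        ∑ k ∈ Finset.Icc 2 n,
          Polynomial.C (b k / (k.factorial : ℝ)) *
            (Polynomial.derivative^[k] (W n)) = 0 := by
  classical
  have hb0 : b 0 = 0 := by simp [hb]
  have hb1 : b 1 = m 1 := by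
    rw [hb]
    simp [Finset.sum_range_succ, ha0]
  have hδ : ∀ M : ℕ, ∑ i ∈ Finset.range (M+1), (M.choose i : ℝ) * m i * a (M-i)
      = if M = 0 then 1 else 0 := by
    intro M
    rcases Nat.eq_zero_or_pos M with h | h
    · subst h; simp [hm0, ha0]
    · rw [if_neg (by omega)]; exact ha M h
  -- Key identity: N a_N + ∑ C(N,k) b_k a_{N-k} = 0
  have hL2 : ∀ N : ℕ, (N:ℝ) * a N
      + ∑ k ∈ Finset.range (N+1), (N.choose k : ℝ) * b k * a (N-k) = 0 := by
    intro N
    have hS : ∑ k ∈ Finset.range (N+1), (N.choose k : ℝ) * b k * a (N-k)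
        = ∑ i ∈ Finset.range (N+1), (N.choose i : ℝ) * i * m i * csq a (N-i) := by
      have e1 : ∑ k ∈ Finset.range (N+1), (N.choose k : ℝ) * b k * a (N-k)
          = ∑ k ∈ range (N+1), ∑ i ∈ range (k+1),
              (N.choose k : ℝ) * ((k.choose i : ℝ) * i * m i * a (k-i)) * a (N-k) := by
        apply Finset.sum_congr rfl
        intro k hk
        rw [hb k, Finset.mul_sum, Finset.sum_mul]
      rw [e1, tri_swap N (fun i k =>
        (N.choose k : ℝ) * ((k.choose i : ℝ) * i * m i * a (k-i)) * a (N-k))]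
      apply Finset.sum_congr rfl
      intro i hi
      rw [Finset.mem_range] at hi
      have e2 : ∑ l ∈ range (N+1-i),
          (N.choose (i+l) : ℝ) * (((i+l).choose i : ℝ) * i * m i * a (i+l-i)) * a (N-(i+l))
          = (N.choose i : ℝ) * i * m i *
              ∑ l ∈ range ((N-i)+1), ((N-i).choose l : ℝ) * a l * a (N-i-l) := by
        rw [Finset.mul_sum, show (N-i)+1 = N+1-i by omega]
        apply Finset.sum_congr rfl
        intro l hl
        rw [Finset.mem_range] at hl
        have e := Nat.choose_mul (n := N) (k := i+l) (s := i) (by omega)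
        rw [Nat.add_sub_cancel_left] at e
        have e' : (N.choose (i+l) : ℝ) * ((i+l).choose i : ℝ)
            = (N.choose i : ℝ) * ((N-i).choose l : ℝ) := by
          exact_mod_cast congrArg (Nat.cast : ℕ → ℝ) e
        rw [Nat.add_sub_cancel_left, show N-(i+l) = N-i-l by omega]
        linear_combination ((i:ℝ) * m i * a l * a (N-i-l)) * e'
      rw [e2]
      rfl
    have h1 := MA2 m a hδ N
    have h2 := tMp m a hδ N
    have h3 : (N:ℝ) * a N
        = (∑ i ∈ Finset.range (N+1), (N.choose i : ℝ) * i * m i * csq a (N-i)) + 2 * N * a N := by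
      rw [← h2, ← Finset.sum_add_distrib, ← h1, Finset.mul_sum]
      apply Finset.sum_congr rfl
      intro i hi
      rw [Finset.mem_range] at hi
      rw [Nat.cast_sub (by omega : i ≤ N)]
      ring
    rw [hS]
    linarith
  intro n
  -- reindexed form of W n
  have hW' : W n = ∑ j ∈ Finset.range (n+1),
      Polynomial.C ((n.choose j : ℝ) * a (n-j)) * Polynomial.X ^ j := by
    rw [hW n]
    conv_rhs => rw [← Finset.sum_range_reflect]
    apply Finset.sum_congr rfl
    intro k hk
    rw [Finset.mem_range] at hk
    have h1 : n + 1 - 1 - k = n - k := by omega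
    have h2 : n - (n - k) = k := by omega
    rw [h1, h2, Nat.choose_symm (by omega : k ≤ n)]
  have hw : ∀ t, (W n).coeff t = if t ≤ n then (n.choose t : ℝ) * a (n-t) else 0 := by
    intro t
    rw [hW', Polynomial.finset_sum_coeff]
    simp only [Polynomial.coeff_C_mul, Polynomial.coeff_X_pow, mul_ite, mul_one, mul_zero]
    rw [Finset.sum_ite_eq]
    simp [Nat.lt_succ_iff]
  have hXd : ∀ t : ℕ, (Polynomial.X * Polynomial.derivative (W n)).coeff t
      = (t:ℝ) * (W n).coeff t := by
    intro t
    cases t with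
    | zero => simp [Polynomial.mul_coeff_zero]
    | succ s =>
        rw [Polynomial.coeff_X_mul, Polynomial.coeff_derivative]
        push_cast
        ring
  refine Polynomial.ext fun j => ?_
  rw [sub_mul]
  simp only [Polynomial.coeff_add, Polynomial.coeff_sub, Polynomial.coeff_C_mul,
    Polynomial.finset_sum_coeff, Polynomial.coeff_iterate_derivative, nsmul_eq_mul,
    Polynomial.coeff_zero, hXd, Polynomial.coeff_derivative]
  by_cases hj : j ≤ n
  · have hwj : (W n).coeff j = (n.choose j : ℝ) * a (n-j) := by rw [hw]; exact if_pos hj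
    have hsum : ∑ k ∈ Finset.Icc 2 n,
        b k / (k.factorial : ℝ) * ((((j+k).descFactorial k : ℕ) : ℝ) * (W n).coeff (j+k))
        = (n.choose j : ℝ) *
            ∑ k ∈ Finset.Icc 2 (n-j), ((n-j).choose k : ℝ) * b k * a (n-j-k) := by
      rw [Finset.mul_sum]
      have hterm : ∀ k ∈ Finset.Icc 2 n,
          b k / (k.factorial : ℝ) * ((((j+k).descFactorial k : ℕ) : ℝ) * (W n).coeff (j+k))
          = (n.choose j : ℝ) * (((n-j).choose k : ℝ) * b k * a (n-j-k)) := by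
        intro k hk
        rw [hw (j+k)]
        by_cases hjk : j + k ≤ n
        · rw [if_pos hjk]
          have hnat : (j+k).descFactorial k * (n.choose (j+k))
              = k.factorial * (n.choose j * ((n-j).choose k)) := by
            rw [Nat.descFactorial_eq_factorial_mul_choose]
            have e3 : (j+k).choose k = (j+k).choose j := by
              rw [← Nat.choose_symm (Nat.le_add_right j k), Nat.add_sub_cancel_left]
            have e := Nat.choose_mul (n := n) (k := j+k) (s := j) (by omega)
            rw [Nat.add_sub_cancel_left] at e
            rw [e3, mul_assoc]
            congr 1
            rw [mul_comm, e]
          have hcast : (((j+k).descFactorial k : ℕ) : ℝ) * (n.choose (j+k) : ℝ)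
              = (k.factorial : ℝ) * ((n.choose j : ℝ) * ((n-j).choose k : ℝ)) := by
            exact_mod_cast congrArg (Nat.cast : ℕ → ℝ) hnat
          have hfact : (k.factorial : ℝ) ≠ 0 := Nat.cast_ne_zero.mpr k.factorial_ne_zero
          have hsub : n - (j+k) = n - j - k := by omega
          rw [hsub, div_mul_eq_mul_div, div_eq_iff hfact]
          linear_combination (b k * a (n-j-k)) * hcast
        · rw [if_neg hjk]
          have : (n-j).choose k = 0 := Nat.choose_eq_zero_of_lt (by omega)
          rw [this]
          simp
      rw [Finset.sum_congr rfl hterm]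
      symm
      apply Finset.sum_subset
      · apply Finset.Icc_subset_Icc_right
        omega
      · intro k hk hk'
        rw [Finset.mem_Icc] at hk hk'
        have : (n-j).choose k = 0 := Nat.choose_eq_zero_of_lt (by omega)
        rw [this]
        simp
    rw [hsum, hwj]
    rcases Nat.eq_zero_or_pos (n - j) with hN | hN
    · have hjn : j = n := by omega
      subst hjn
      have : (W j).coeff (j+1) = 0 := by rw [hw]; exact if_neg (by omega)
      rw [this, hN]
      simp
    · have hwj1 : (W n).coeff (j+1) = (n.choose (j+1) : ℝ) * a (n-(j+1)) := by
        rw [hw]; exact if_pos (by omega)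
      rw [hwj1]
      set N := n - j with hNdef
      have hsplit : ∑ k ∈ Finset.range (N+1), (N.choose k : ℝ) * b k * a (N-k)
          = (N.choose 0 : ℝ) * b 0 * a N + (N.choose 1 : ℝ) * b 1 * a (N-1)
            + ∑ k ∈ Finset.Icc 2 N, (N.choose k : ℝ) * b k * a (N-k) := by
        have hIcc : ∑ k ∈ Finset.Icc 2 N, (N.choose k : ℝ) * b k * a (N-k)
            = ∑ i ∈ Finset.range (N-1), (N.choose (2+i) : ℝ) * b (2+i) * a (N-(2+i)) := by
          rw [← Finset.Ico_add_one_right_eq_Icc, Finset.sum_Ico_eq_sum_range,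
            show N+1-2 = N-1 by omega]
        rw [hIcc, show N+1 = (N-1)+1+1 by omega, Finset.sum_range_succ', Finset.sum_range_succ']
        have : ∀ i : ℕ, i + 1 + 1 = 2 + i := by omega
        simp only [this, zero_add, Nat.sub_zero]
        ring
      have hE := hL2 N
      rw [hsplit] at hE
      simp only [Nat.choose_zero_right, Nat.choose_one_right, hb0, hb1, Nat.cast_one,
        one_mul, mul_zero, zero_mul, zero_add] at hE
      have hc1 : (n.choose (j+1) : ℝ) * ((j:ℝ) + 1) = (n.choose j : ℝ) * (N:ℝ) := by
        have := Nat.choose_succ_right_eq n j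
        have h' : (n.choose (j+1) : ℝ) * (((j:ℕ):ℝ) + 1) = (n.choose j : ℝ) * ((n - j : ℕ) : ℝ) := by
          exact_mod_cast congrArg (Nat.cast : ℕ → ℝ) this
        exact h'
      have hcast : ((N:ℕ):ℝ) = (n:ℝ) - (j:ℝ) := by
        rw [hNdef, Nat.cast_sub hj]
      have hsub1 : n - (j+1) = N - 1 := by omega
      rw [hsub1]
      linear_combination ((n.choose j : ℝ)) * hE + (m 1 * a (N-1)) * hc1
        - ((n.choose j : ℝ) * a N) * hcast
  · have h1 : (W n).coeff j = 0 := by rw [hw]; exact if_neg hj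
    have h2 : (W n).coeff (j+1) = 0 := by rw [hw]; exact if_neg (by omega)
    have h3 : ∀ k ∈ Finset.Icc 2 n, b k / (k.factorial : ℝ) *
        ((((j+k).descFactorial k : ℕ) : ℝ) * (W n).coeff (j+k)) = 0 := by
      intro k hk
      have : (W n).coeff (j+k) = 0 := by rw [hw]; exact if_neg (by omega)
      rw [this]
      ring
    rw [Finset.sum_congr rfl h3, h1, h2]
    simp
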